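/- (One-dimensional Floer–Hofer estimate) Let λ > 0, η > 0 with λη² ≤ 1, let M ≥ 0 and A ∈ ℝ. Suppose s₀ < s₁ are real numbers with s₁ − s₀ ≤ 2η, and g: [s₀,s₁] → ℝ is twice continuously differentiable with g(s₀) ≤ M, g(s₁) ≤ M, and g''(s) + λ g(s) ≥ A for all s ∈ [s₀,s₁]. Then g(s) ≤ (λM + |A|)η² + M for all s ∈ [s₀,s₁]. -/

import Mathlib

open Set

private lemma keyFH (lam eta M A s0 s1 del : ℝ) (hlam : 0 < lam) (heta : 0 < eta)
    (hdel : 0 < del)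
    (hle : lam * eta ^ 2 ≤ 1) (hM : 0 ≤ M) (hs : s0 < s1) (hwidth : s1 - s0 ≤ 2 * eta)
    (g g' g'' : ℝ → ℝ)
    (hg' : ∀ x ∈ Set.Icc s0 s1, HasDerivWithinAt g (g' x) (Set.Icc s0 s1) x)
    (hg'' : ∀ x ∈ Set.Icc s0 s1, HasDerivWithinAt g' (g'' x) (Set.Icc s0 s1) x)
    (h0 : g s0 ≤ M) (h1 : g s1 ≤ M)
    (hineq : ∀ x ∈ Set.Icc s0 s1, A ≤ g'' x + lam * g x) :
    ∀ x ∈ Set.Icc s0 s1, g x ≤ (lam * M + |A| + del) * eta ^ 2 + M := by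
  have habsA : 0 ≤ |A| := abs_nonneg A
  have hnA : -|A| ≤ A := neg_abs_le A
  obtain ⟨ε, hεdef⟩ : ∃ ε : ℝ, ε = (s1 - s0) / 2 := ⟨_, rfl⟩
  obtain ⟨m, hmdef⟩ : ∃ m : ℝ, m = (s0 + s1) / 2 := ⟨_, rfl⟩
  have hε0 : 0 < ε := by rw [hεdef]; linarith
  have hεη : ε ≤ eta := by rw [hεdef]; linarith
  obtain ⟨C, hCdef⟩ : ∃ C : ℝ, C = lam * M + |A| + del := ⟨_, rfl⟩
  have hC0 : 0 < C := by
    have : 0 ≤ lam * M := mul_nonneg hlam.le hM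
    rw [hCdef]; linarith
  obtain ⟨r, hrdef⟩ : ∃ r : ℝ, r = Real.sqrt lam := ⟨_, rfl⟩
  have hr0 : 0 ≤ r := hrdef ▸ Real.sqrt_nonneg _
  have hr2 : r ^ 2 = lam := hrdef ▸ Real.sq_sqrt hlam.le
  have hεsq : ε ^ 2 ≤ eta ^ 2 := by nlinarith
  have hlamε : lam * ε ^ 2 ≤ 1 :=
    le_trans (mul_le_mul_of_nonneg_left hεsq hlam.le) hle
  have hrε : r * ε ≤ 1 := by nlinarith [sq_nonneg (r * ε - 1)]
  -- the barrier and auxiliary functions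
  obtain ⟨φ, hφdef⟩ : ∃ φ : ℝ → ℝ, φ = fun s => g s - (C * (ε ^ 2 - (s - m) ^ 2) + M) :=
    ⟨_, rfl⟩
  obtain ⟨φ', hφ'def⟩ : ∃ φ' : ℝ → ℝ, φ' = fun s => g' s + 2 * C * (s - m) := ⟨_, rfl⟩
  obtain ⟨c, hcdef⟩ : ∃ c : ℝ → ℝ, c = fun s => Real.cos (r * (s - m)) := ⟨_, rfl⟩
  obtain ⟨cd, hcddef⟩ : ∃ cd : ℝ → ℝ, cd = fun s => -(Real.sin (r * (s - m)) * r) :=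
    ⟨_, rfl⟩
  obtain ⟨W, hWdef⟩ : ∃ W : ℝ → ℝ, W = fun s => φ' s * c s - φ s * cd s := ⟨_, rfl⟩
  obtain ⟨ψ, hψdef⟩ : ∃ ψ : ℝ → ℝ, ψ = fun s => φ s / c s := ⟨_, rfl⟩
  -- |s - m| ≤ ε on the interval, and c > 0
  have habs : ∀ t ∈ Icc s0 s1, |t - m| ≤ ε := by
    intro t ht
    rw [abs_le]
    constructor <;> · rw [hεdef, hmdef]; cases' ht with ha hb; linarith
  have hcpos : ∀ t ∈ Icc s0 s1, 0 < c t := by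
    intro t ht
    rw [hcdef]
    apply Real.cos_pos_of_mem_Ioo
    have h := habs t ht
    have hπ := Real.pi_gt_three
    have h2 : |r * (t - m)| ≤ 1 := by
      rw [abs_mul, abs_of_nonneg hr0]
      nlinarith [abs_nonneg (t - m), mul_le_mul_of_nonneg_left (habs t ht) hr0]
    rcases abs_le.mp h2 with ⟨ha, hb⟩
    rw [Set.mem_Ioo]
    constructor <;> linarith
  -- pointwise differential inequality for φ
  have hkey : ∀ t ∈ Icc s0 s1, del ≤ (g'' t + 2 * C) + lam * φ t := by
    intro t ht
    have h1 := hineq t ht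
    have h2 : 0 ≤ (t - m) ^ 2 := sq_nonneg _
    have h3 : (t - m) ^ 2 ≤ ε ^ 2 := by
      have := habs t ht
      nlinarith [abs_nonneg (t - m), sq_abs (t - m)]
    have h4 : lam * (C * (ε ^ 2 - (t - m) ^ 2)) ≤ C := by
      have h5 : lam * (ε ^ 2 - (t - m) ^ 2) ≤ lam * ε ^ 2 :=
        mul_le_mul_of_nonneg_left (by linarith) hlam.le
      have h6 : C * (lam * (ε ^ 2 - (t - m) ^ 2)) ≤ C * 1 :=
        mul_le_mul_of_nonneg_left (h5.trans hlamε) hC0.le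
      linarith [h6]
    have hlM : 0 ≤ lam * M := mul_nonneg hlam.le hM
    have hφt : φ t = g t - (C * (ε ^ 2 - (t - m) ^ 2) + M) := by rw [hφdef]
    rw [hφt]
    linarith [h4, h1, hnA, hCdef]
  -- derivatives at interior points
  have hderivφ : ∀ t ∈ Ioo s0 s1, HasDerivAt φ (φ' t) t := by
    intro t ht
    have hnb : Icc s0 s1 ∈ nhds t := Icc_mem_nhds ht.1 ht.2
    have hgt : HasDerivAt g (g' t) t := (hg' t (Ioo_subset_Icc_self ht)).hasDerivAt hnb
    have hsq : HasDerivAt (fun s : ℝ => (s - m) ^ 2) (2 * (t - m)) t := by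
      exact (((hasDerivAt_id t).sub_const m).pow 2).congr_deriv (by simp)
    have hb : HasDerivAt (fun s : ℝ => C * (ε ^ 2 - (s - m) ^ 2) + M)
        (-(2 * C * (t - m))) t := by
      have := ((hsq.const_sub (ε ^ 2)).const_mul C).add_const M
      exact this.congr_deriv (by ring)
    have h := hgt.sub hb
    rw [hφdef, hφ'def]
    exact h.congr_deriv (by beta_reduce; ring)
  have hderivφ' : ∀ t ∈ Ioo s0 s1, HasDerivAt φ' (g'' t + 2 * C) t := by
    intro t ht
    have hnb : Icc s0 s1 ∈ nhds t := Icc_mem_nhds ht.1 ht.2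
    have hgt : HasDerivAt g' (g'' t) t := (hg'' t (Ioo_subset_Icc_self ht)).hasDerivAt hnb
    have hb : HasDerivAt (fun s : ℝ => 2 * C * (s - m)) (2 * C) t := by
      simpa using ((hasDerivAt_id t).sub_const m).const_mul (2 * C)
    rw [hφ'def]
    exact hgt.add hb
  have hinner : ∀ t : ℝ, HasDerivAt (fun s : ℝ => r * (s - m)) r t := by
    intro t
    simpa using ((hasDerivAt_id t).sub_const m).const_mul r
  have hderivc : ∀ t : ℝ, HasDerivAt c (cd t) t := by
    intro t
    rw [hcdef, hcddef]
    have h := (hinner t).cos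
    convert h using 1
    ring
  have hderivcd : ∀ t : ℝ, HasDerivAt cd (-(lam * c t)) t := by
    intro t
    have h := ((hinner t).sin.mul_const r).neg
    rw [hcddef, hcdef]
    exact h.congr_deriv (by beta_reduce; rw [← hr2]; ring)
  have hderivW : ∀ t ∈ Ioo s0 s1,
      HasDerivAt W (((g'' t + 2 * C) + lam * φ t) * c t) t := by
    intro t ht
    have h1 := (hderivφ' t ht).mul (hderivc t)
    have h2 := (hderivφ t ht).mul (hderivcd t)
    have h := h1.sub h2
    rw [hWdef]
    exact h.congr_deriv (by ring)
  -- continuity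
  have hgc : ContinuousOn g (Icc s0 s1) := fun x hx => (hg' x hx).continuousWithinAt
  have hg'c : ContinuousOn g' (Icc s0 s1) := fun x hx => (hg'' x hx).continuousWithinAt
  have hφc : ContinuousOn φ (Icc s0 s1) := by
    rw [hφdef]; fun_prop
  have hφ'c : ContinuousOn φ' (Icc s0 s1) := by
    rw [hφ'def]; fun_prop
  have hcc : Continuous c := by rw [hcdef]; fun_prop
  have hcdc : Continuous cd := by rw [hcddef]; fun_prop
  have hWc : ContinuousOn W (Icc s0 s1) := by
    rw [hWdef]
    exact (hφ'c.mul hcc.continuousOn).sub (hφc.mul hcdc.continuousOn)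
  have hψc : ContinuousOn ψ (Icc s0 s1) := by
    rw [hψdef]
    exact hφc.div hcc.continuousOn (fun t ht => (hcpos t ht).ne')
  -- W is strictly monotone
  have hWmono : StrictMonoOn W (Icc s0 s1) := by
    apply strictMonoOn_of_deriv_pos (convex_Icc s0 s1) hWc
    intro t ht
    rw [interior_Icc] at ht
    rw [(hderivW t ht).deriv]
    have h1 := hkey t (Ioo_subset_Icc_self ht)
    have h2 := hcpos t (Ioo_subset_Icc_self ht)
    exact mul_pos (lt_of_lt_of_le hdel h1) h2
  -- derivative of ψ
  have hderivψ : ∀ t ∈ Ioo s0 s1, HasDerivAt ψ (W t / c t ^ 2) t := by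
    intro t ht
    have h := (hderivφ t ht).div (hderivc t) (hcpos t (Ioo_subset_Icc_self ht)).ne'
    rw [hψdef, hWdef]
    exact h
  -- endpoint values of ψ
  have hs0m : (s0 - m) ^ 2 = ε ^ 2 := by rw [hmdef, hεdef]; ring
  have hs1m : (s1 - m) ^ 2 = ε ^ 2 := by rw [hmdef, hεdef]; ring
  have hφ0 : φ s0 ≤ 0 := by
    have h : φ s0 = g s0 - (C * (ε ^ 2 - (s0 - m) ^ 2) + M) := by rw [hφdef]
    rw [h, hs0m]; ring_nf; linarith
  have hφ1 : φ s1 ≤ 0 := by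
    have h : φ s1 = g s1 - (C * (ε ^ 2 - (s1 - m) ^ 2) + M) := by rw [hφdef]
    rw [h, hs1m]; ring_nf; linarith
  have hψ0 : ψ s0 ≤ 0 := by
    rw [hψdef]
    exact div_nonpos_of_nonpos_of_nonneg hφ0 (hcpos s0 (left_mem_Icc.mpr hs.le)).le
  have hψ1 : ψ s1 ≤ 0 := by
    rw [hψdef]
    exact div_nonpos_of_nonpos_of_nonneg hφ1 (hcpos s1 (right_mem_Icc.mpr hs.le)).le
  -- main claim: ψ ≤ 0 on the interval
  have hψle : ∀ x ∈ Icc s0 s1, ψ x ≤ 0 := by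
    intro x hx
    rcases eq_or_lt_of_le hx.1 with h | hx0
    · rwa [← h]
    rcases eq_or_lt_of_le hx.2 with h | hx1
    · rwa [h]
    rcases le_or_gt 0 (W x) with hW0 | hW0
    · -- ψ increasing on [x, s1]
      have hmono : StrictMonoOn ψ (Icc x s1) := by
        apply strictMonoOn_of_deriv_pos (convex_Icc x s1)
          (hψc.mono (Icc_subset_Icc hx.1 le_rfl))
        intro t ht
        rw [interior_Icc] at ht
        have htIoo : t ∈ Ioo s0 s1 := ⟨lt_trans hx0 ht.1, ht.2⟩
        rw [(hderivψ t htIoo).deriv]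
        have hWt : W x < W t := hWmono hx (Ioo_subset_Icc_self htIoo) ht.1
        have hct := hcpos t (Ioo_subset_Icc_self htIoo)
        apply div_pos (by linarith) (by positivity)
      have := hmono (left_mem_Icc.mpr hx1.le) (right_mem_Icc.mpr hx1.le) hx1
      linarith
    · -- ψ decreasing on [s0, x]
      have hmono : StrictAntiOn ψ (Icc s0 x) := by
        apply strictAntiOn_of_deriv_neg (convex_Icc s0 x)
          (hψc.mono (Icc_subset_Icc le_rfl hx.2))
        intro t ht
        rw [interior_Icc] at ht
        have htIoo : t ∈ Ioo s0 s1 := ⟨ht.1, lt_trans ht.2 hx1⟩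
        rw [(hderivψ t htIoo).deriv]
        have hWt : W t < W x := hWmono (Ioo_subset_Icc_self htIoo) hx ht.2
        have hct := hcpos t (Ioo_subset_Icc_self htIoo)
        apply div_neg_of_neg_of_pos (by linarith) (by positivity)
      have := hmono (left_mem_Icc.mpr hx0.le) (right_mem_Icc.mpr hx0.le) hx0
      linarith
  -- conclude
  intro x hx
  have hψx := hψle x hx
  have hcx := hcpos x hx
  have hφx : φ x ≤ 0 := by
    have heq : φ x = ψ x * c x := by
      rw [hψdef]; exact (div_mul_cancel₀ (φ x) hcx.ne').symm
    rw [heq]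
    exact mul_nonpos_of_nonpos_of_nonneg hψx hcx.le
  have hφxeq : φ x = g x - (C * (ε ^ 2 - (x - m) ^ 2) + M) := by rw [hφdef]
  rw [hφxeq] at hφx
  have h2 : (0:ℝ) ≤ C * (x - m) ^ 2 := mul_nonneg hC0.le (sq_nonneg _)
  have h3 : C * ε ^ 2 ≤ C * eta ^ 2 := mul_le_mul_of_nonneg_left hεsq hC0.le
  rw [← hCdef]
  linarith [hφx, h2, h3]

theorem stmt16 (lam eta M A s0 s1 : ℝ) (hlam : 0 < lam) (heta : 0 < eta)
    (hle : lam * eta ^ 2 ≤ 1) (hM : 0 ≤ M) (hs : s0 < s1) (hwidth : s1 - s0 ≤ 2 * eta)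
    (g g' g'' : ℝ → ℝ)
    (hg' : ∀ x ∈ Set.Icc s0 s1, HasDerivWithinAt g (g' x) (Set.Icc s0 s1) x)
    (hg'' : ∀ x ∈ Set.Icc s0 s1, HasDerivWithinAt g' (g'' x) (Set.Icc s0 s1) x)
    (hcont : ContinuousOn g'' (Set.Icc s0 s1))
    (h0 : g s0 ≤ M) (h1 : g s1 ≤ M)
    (hineq : ∀ x ∈ Set.Icc s0 s1, A ≤ g'' x + lam * g x) :
    ∀ x ∈ Set.Icc s0 s1, g x ≤ (lam * M + |A|) * eta ^ 2 + M := by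
  intro x hx
  apply le_of_forall_pos_le_add
  intro e he
  have hdel : 0 < e / eta ^ 2 := by positivity
  have h := keyFH lam eta M A s0 s1 (e / eta ^ 2) hlam heta hdel hle hM hs hwidth
    g g' g'' hg' hg'' h0 h1 hineq x hx
  have heq : (lam * M + |A| + e / eta ^ 2) * eta ^ 2 + M
      = (lam * M + |A|) * eta ^ 2 + M + e := by
    field_simp
    ring
  linarith [heq ▸ h]
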